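/- arXiv:1704.08472 — 5 statements merged into one kernel-verified Lean document; each statement's English description precedes it below -/
import Mathlib

section
/- Let G be a finite simple graph on n ≥ 2 vertices with degree sequence d_1 ≥ d_2 ≥ … ≥ d_n. Then f(G) ≤ d_1 − d_2 = diff(G). -/
open Finset

variable {V : Type*}

open scoped Classical in
/-- Degree of `v` in the subgraph of `G` induced on the vertex set `A`
(number of neighbours of `v` inside `A`). -/
noncomputable def degOn (G : SimpleGraph V) (A : Finset V) (v : V) : ℕ :=
  (A.filter fun w => G.Adj v w).card

/-- Maximum degree of the subgraph of `G` induced on `A`. -/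
noncomputable def maxDegOn (G : SimpleGraph V) (A : Finset V) : ℕ :=
  A.sup (degOn G A)

open scoped Classical in
/-- The subgraph of `G` induced on `A` has fewer than `k` vertices or at least `k`
vertices realising its maximum degree. -/
def equates (G : SimpleGraph V) (k : ℕ) (A : Finset V) : Prop :=
  A.card < k ∨ k ≤ (A.filter fun v => degOn G A v = maxDegOn G A).card

open scoped Classical in
/-- `f_k` of the subgraph of `G` induced on `A`: the minimum number of vertices of `A`
whose deletion leaves an induced subgraph with fewer than `k` vertices or with at
least `k` vertices realising its maximum degree. -/
noncomputable def fkOn (G : SimpleGraph V) (k : ℕ) (A : Finset V) : ℕ :=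
  sInf {m | ∃ S, S ⊆ A ∧ S.card = m ∧ equates G k (A \ S)}

/-- `f_k(G)`. -/
noncomputable def fk [Fintype V] (G : SimpleGraph V) (k : ℕ) : ℕ :=
  fkOn G k Finset.univ

/-- `diff` of the subgraph of `G` induced on `A`: the largest degree minus the
second-largest degree (with multiplicity) of this subgraph. -/
noncomputable def diffOn (G : SimpleGraph V) (A : Finset V) : ℕ :=
  maxDegOn G A - ((A.val.map (degOn G A)).erase (maxDegOn G A)).sup

/-- `diff(G) = d₁ - d₂`, the difference between the largest and second-largest
vertex degrees of `G`. -/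
noncomputable def diffDeg [Fintype V] (G : SimpleGraph V) : ℕ :=
  diffOn G Finset.univ

/-- For a graph `G` on `n ≥ 2` vertices, `f(G) ≤ diff(G) = d₁ - d₂`. -/
theorem stmt0 {V : Type*} [Fintype V] (G : SimpleGraph V)
    (hn : 2 ≤ Fintype.card V) :
    fk G 2 ≤ diffDeg G := by
  classical
  have hne : (univ : Finset V).Nonempty := by
    rw [← Finset.card_pos, Finset.card_univ]; omega
  set d : V → ℕ := degOn G (univ : Finset V) with hd
  obtain ⟨v, -, hv⟩ := Finset.exists_mem_eq_sup (univ : Finset V) hne d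
  have hv' : maxDegOn G (univ : Finset V) = d v := hv
  by_cases hcase : ∃ w : V, w ≠ v ∧ d w = d v
  · -- two vertices already realise the maximum degree
    obtain ⟨w, hwv, hw⟩ := hcase
    have h0 : (0 : ℕ) ∈ {m | ∃ S, S ⊆ (univ : Finset V) ∧ S.card = m ∧
        equates G 2 (univ \ S)} := by
      refine ⟨∅, empty_subset _, card_empty, Or.inr ?_⟩
      rw [Finset.sdiff_empty]
      have hsub : ({w, v} : Finset V) ⊆
          univ.filter fun x => degOn G univ x = maxDegOn G univ := by
        intro x hx
        simp only [Finset.mem_insert, Finset.mem_singleton] at hx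
        rcases hx with rfl | rfl
        · exact Finset.mem_filter.mpr ⟨Finset.mem_univ _, by rw [hv', ← hd]; exact hw⟩
        · exact Finset.mem_filter.mpr ⟨Finset.mem_univ _, by rw [hv', ← hd]⟩
      calc (2 : ℕ) = ({w, v} : Finset V).card := by
              rw [Finset.card_insert_of_notMem (by simp [hwv]), Finset.card_singleton]
        _ ≤ _ := Finset.card_le_card hsub
    exact le_trans (Nat.sInf_le h0) (Nat.zero_le _)
  · push_neg at hcase
    -- v is the unique vertex of maximum degree
    set m2 : ℕ := ((univ : Finset V).erase v).sup d with hm2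
    -- the second-largest degree in the `diffOn` sense is `m2`
    have hmul : (((univ : Finset V).val.map d).erase (d v)).sup = m2 := by
      have h1 : (univ : Finset V).val = v ::ₘ ((univ : Finset V).val.erase v) :=
        (Multiset.cons_erase (Finset.mem_univ v)).symm
      rw [show ((univ : Finset V).val.map d) = d v ::ₘ (((univ : Finset V).val.erase v).map d) by
            conv_lhs => rw [h1, Multiset.map_cons],
          Multiset.erase_cons_head, hm2, Finset.sup_def, Finset.erase_val]
    have hdiff : diffDeg G = d v - m2 := by
      show maxDegOn G (univ : Finset V) - _ = _
      rw [hv']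
      congr 1
    -- m2 ≤ d v and m2 is attained at some u ≠ v
    have hle : ∀ w : V, w ≠ v → d w ≤ m2 := fun w hwv =>
      Finset.le_sup (Finset.mem_erase.mpr ⟨hwv, Finset.mem_univ w⟩)
    have hm2dv : m2 ≤ d v := by
      refine Finset.sup_le fun w _ => ?_
      rw [← hv]
      exact Finset.le_sup (Finset.mem_univ w)
    have hne' : ((univ : Finset V).erase v).Nonempty := by
      rw [← Finset.card_pos, Finset.card_erase_of_mem (Finset.mem_univ v),
        Finset.card_univ]
      omega
    obtain ⟨u, hu, hum2⟩ := Finset.exists_mem_eq_sup _ hne' d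
    have huv : u ≠ v := (Finset.mem_erase.mp hu).1
    have hudeg : d u = m2 := hum2.symm
    -- the neighbourhood filters
    set F : V → Finset V := fun x => univ.filter fun y => G.Adj x y with hF
    have hdF : ∀ x, d x = (F x).card := fun x => rfl
    have hself : ∀ x, x ∉ F x := fun x hx => G.irrefl (Finset.mem_filter.mp hx).2
    set T : Finset V := F v \ insert u (F u) with hT
    -- |T| ≥ d v - m2
    have hTcard : d v - m2 ≤ T.card := by
      by_cases hadj : G.Adj v u
      · -- v ∈ F u, so we may remove v from the deleted set
        have hvFu : v ∈ F u := Finset.mem_filter.mpr ⟨Finset.mem_univ _, hadj.symm⟩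
        have hTeq : T = F v \ insert u ((F u).erase v) := by
          ext x
          simp only [hT, Finset.mem_sdiff, Finset.mem_insert, Finset.mem_erase]
          constructor
          · rintro ⟨hx, hx2⟩; exact ⟨hx, fun h => hx2 (by tauto)⟩
          · rintro ⟨hx, hx2⟩
            refine ⟨hx, fun h => hx2 ?_⟩
            rcases h with rfl | h
            · exact Or.inl rfl
            · refine Or.inr ⟨fun hxv => ?_, h⟩
              exact hself v (hxv ▸ hx)
        have hcard' : (insert u ((F u).erase v)).card = m2 := by
          rw [Finset.card_insert_of_notMem (fun h => hself u (Finset.mem_erase.mp h).2),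
            Finset.card_erase_of_mem hvFu, ← hdF, hudeg]
          have : 1 ≤ m2 := by
            rw [← hudeg, hdF]
            exact Finset.card_pos.mpr ⟨v, hvFu⟩
          omega
        calc d v - m2 = (F v).card - (insert u ((F u).erase v)).card := by
              rw [← hdF, hcard']
          _ ≤ _ := by rw [hTeq]; exact Finset.le_card_sdiff _ _
      · -- u ∉ F v, so removing u from the deleted set is harmless
        have huFv : u ∉ F v := fun h => hadj (Finset.mem_filter.mp h).2
        have hTeq : T = F v \ F u := by
          ext x
          simp only [hT, Finset.mem_sdiff, Finset.mem_insert]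
          constructor
          · rintro ⟨hx, hx2⟩; exact ⟨hx, fun h => hx2 (Or.inr h)⟩
          · rintro ⟨hx, hx2⟩
            refine ⟨hx, fun h => ?_⟩
            rcases h with rfl | h
            · exact huFv hx
            · exact hx2 h
        calc d v - m2 = (F v).card - (F u).card := by rw [← hdF, ← hdF, hudeg]
          _ ≤ _ := by rw [hTeq]; exact Finset.le_card_sdiff _ _
    obtain ⟨S, hST, hScard⟩ := Finset.exists_subset_card_eq hTcard
    have hSFv : S ⊆ F v := hST.trans (Finset.sdiff_subset)
    have hTdisj : Disjoint T (insert u (F u)) := Finset.sdiff_disjoint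
    have hSdisjFu : Disjoint S (F u) :=
      (hTdisj.mono_left hST).mono_right (Finset.subset_insert _ _)
    have hvS : v ∉ S := fun h => hself v (hSFv h)
    have huS : u ∉ S := fun h =>
      Finset.disjoint_left.mp (hTdisj.mono_left hST) h (Finset.mem_insert_self _ _)
    set A : Finset V := univ \ S with hA
    have hvA : v ∈ A := Finset.mem_sdiff.mpr ⟨Finset.mem_univ _, hvS⟩
    have huA : u ∈ A := Finset.mem_sdiff.mpr ⟨Finset.mem_univ _, huS⟩
    -- degrees in the induced subgraph on A
    have hfilt : ∀ x : V, A.filter (fun y => G.Adj x y) = F x \ S := by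
      intro x
      ext y
      simp only [hA, hF, Finset.mem_filter, Finset.mem_sdiff, Finset.mem_univ, true_and]
      tauto
    have hdegAv : degOn G A v = m2 := by
      show (A.filter fun y => G.Adj v y).card = m2
      rw [hfilt, Finset.card_sdiff_of_subset hSFv, ← hdF, hScard]
      omega
    have hdegAu : degOn G A u = m2 := by
      show (A.filter fun y => G.Adj u y).card = m2
      rw [hfilt, Finset.sdiff_eq_self_of_disjoint hSdisjFu.symm, ← hdF, hudeg]
    have hbound : ∀ w ∈ A, degOn G A w ≤ m2 := by
      intro w hw
      by_cases hwv : w = v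
      · rw [hwv, hdegAv]
      · calc degOn G A w ≤ degOn G univ w :=
              Finset.card_le_card (Finset.filter_subset_filter _ (Finset.sdiff_subset))
          _ ≤ m2 := hle w hwv
    have hmaxA : maxDegOn G A = m2 := by
      refine le_antisymm (Finset.sup_le hbound) ?_
      rw [← hdegAv]
      exact Finset.le_sup hvA
    have hequates : equates G 2 A := by
      refine Or.inr ?_
      have hsub : ({u, v} : Finset V) ⊆
          A.filter fun x => degOn G A x = maxDegOn G A := by
        intro x hx
        simp only [Finset.mem_insert, Finset.mem_singleton] at hx
        rcases hx with rfl | rfl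
        · exact Finset.mem_filter.mpr ⟨huA, by rw [hdegAu, hmaxA]⟩
        · exact Finset.mem_filter.mpr ⟨hvA, by rw [hdegAv, hmaxA]⟩
      calc (2 : ℕ) = ({u, v} : Finset V).card := by
            rw [Finset.card_insert_of_notMem (by simp [huv]), Finset.card_singleton]
        _ ≤ _ := Finset.card_le_card hsub
    have hmem : (d v - m2) ∈ {m | ∃ S, S ⊆ (univ : Finset V) ∧ S.card = m ∧
        equates G 2 (univ \ S)} := ⟨S, Finset.subset_univ S, hScard, hequates⟩
    rw [hdiff]
    exact Nat.sInf_le hmem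
end

section
/- Let G be a finite simple graph on n ≥ 2 vertices and let v be a vertex of maximum degree in G. Then either f(G) = diff(G), or v belongs to every minimum 2-equating set of G (in the latter case v is the unique vertex of maximum degree). -/
open Finset

variable {V : Type*}

set_option linter.unusedSectionVars false

section aux
open scoped Classical

variable {V : Type*} [Fintype V] [DecidableEq V] (G : SimpleGraph V)

lemma degOn_sdiff (A S : Finset V) (w : V) :
    degOn G (A \ S) w = ((A.filter fun x => G.Adj w x) \ S).card := by
  unfold degOn
  congr 1
  ext x
  simp only [Finset.mem_filter, Finset.mem_sdiff]
  tauto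

lemma degOn_mono (A B : Finset V) (h : A ⊆ B) (w : V) :
    degOn G A w ≤ degOn G B w := by
  unfold degOn
  exact Finset.card_le_card (Finset.monotone_filter_left _ h)

lemma maxDegOn_univ_eq (v : V) (hv : ∀ w, degOn G Finset.univ w ≤ degOn G Finset.univ v) :
    maxDegOn G Finset.univ = degOn G Finset.univ v :=
  le_antisymm (Finset.sup_le fun w _ => hv w) (Finset.le_sup (Finset.mem_univ v))

lemma diffDeg_eq (v : V) (hv : ∀ w, degOn G Finset.univ w ≤ degOn G Finset.univ v) :
    diffDeg G = degOn G Finset.univ v - (Finset.univ.erase v).sup (degOn G Finset.univ) := by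
  unfold diffDeg diffOn
  rw [maxDegOn_univ_eq G v hv]
  congr 1
  have huniv : (Finset.univ : Finset V).val = v ::ₘ (Finset.univ.erase v).val := by
    rw [Finset.erase_val]
    exact (Multiset.cons_erase (Finset.mem_univ v : v ∈ Finset.univ)).symm
  rw [huniv, Multiset.map_cons, Multiset.erase_cons_head, Finset.sup_def]

/-- Upper bound: f(G) ≤ D - m2 always. -/
lemma fk_le (hn : 2 ≤ Fintype.card V)
    (v : V) (hv : ∀ w, degOn G Finset.univ w ≤ degOn G Finset.univ v) :
    fk G 2 ≤ degOn G Finset.univ v - (Finset.univ.erase v).sup (degOn G Finset.univ) := by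
  set D := degOn G Finset.univ v with hD
  set m2 := (Finset.univ.erase v).sup (degOn G Finset.univ) with hm2
  have hne : (Finset.univ.erase v).Nonempty := by
    rw [← Finset.card_pos, Finset.card_erase_of_mem (Finset.mem_univ v), Finset.card_univ]
    omega
  obtain ⟨u, hu, hum⟩ := Finset.exists_mem_eq_sup _ hne (degOn G Finset.univ)
  have huv : u ≠ v := (Finset.mem_erase.mp hu).1
  have hdu : degOn G Finset.univ u = m2 := hum.symm
  have hm2D : m2 ≤ D := Finset.sup_le fun w _ => hv w
  set Nv : Finset V := Finset.univ.filter (fun w => G.Adj v w) with hNv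
  set Nu : Finset V := Finset.univ.filter (fun w => G.Adj u w) with hNu
  have hNvcard : Nv.card = D := rfl
  have hNucard : Nu.card = m2 := hdu
  have hvNv : v ∉ Nv := by simp [hNv]
  have hint : (Nv ∩ insert u Nu).card ≤ m2 := by
    by_cases hadj : G.Adj u v
    · have hsub : Nv ∩ insert u Nu ⊆ insert u (Nu.erase v) := by
        intro w hw
        simp only [Finset.mem_inter, Finset.mem_insert, hNv, hNu, Finset.mem_filter,
          Finset.mem_univ, true_and, Finset.mem_erase] at hw ⊢
        rcases hw with ⟨hwv, rfl | hwu⟩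
        · exact Or.inl rfl
        · exact Or.inr ⟨(G.ne_of_adj hwv).symm, hwu⟩
      have hvNu : v ∈ Nu := by simp [hNu, hadj]
      have h1 : 1 ≤ Nu.card := Finset.card_pos.mpr ⟨v, hvNu⟩
      have h2 := Finset.card_insert_le u (Nu.erase v)
      have h3 := Finset.card_erase_of_mem hvNu
      have h4 := Finset.card_le_card hsub
      omega
    · have hsub : Nv ∩ insert u Nu ⊆ Nu := by
        intro w hw
        simp only [Finset.mem_inter, Finset.mem_insert] at hw
        rcases hw.2 with rfl | h
        · exact absurd (G.adj_symm (by simpa [hNv] using hw.1)) hadj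
        · exact h
      calc (Nv ∩ insert u Nu).card ≤ Nu.card := Finset.card_le_card hsub
        _ = m2 := hNucard
  have hcard : D - m2 ≤ (Nv \ insert u Nu).card := by
    have h1 : Nv \ insert u Nu = Nv \ (Nv ∩ insert u Nu) := (Finset.sdiff_inter_self_left _ _).symm
    rw [h1, Finset.card_sdiff_of_subset Finset.inter_subset_left, hNvcard]
    omega
  obtain ⟨T, hTP, hTcard⟩ := Finset.exists_subset_card_eq hcard
  have hTNv : T ⊆ Nv := hTP.trans Finset.sdiff_subset
  have hTu : ∀ w ∈ T, w ≠ u ∧ w ∉ Nu := by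
    intro w hw
    have := hTP hw
    simp only [Finset.mem_sdiff, Finset.mem_insert, not_or] at this
    exact this.2
  have hvT : v ∉ T := fun h => hvNv (hTNv h)
  have huT : u ∉ T := fun h => (hTu u h).1 rfl
  have hdegv : degOn G (Finset.univ \ T) v = m2 := by
    rw [degOn_sdiff, ← hNv, Finset.card_sdiff_of_subset hTNv, hNvcard, hTcard]
    omega
  have hdegu : degOn G (Finset.univ \ T) u = m2 := by
    rw [degOn_sdiff, ← hNu]
    have : Nu \ T = Nu := by
      apply Finset.sdiff_eq_self_of_disjoint
      rw [Finset.disjoint_right]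
      intro w hw
      exact fun hNuw => (hTu w hw).2 hNuw
    rw [this, hNucard]
  have hmax : maxDegOn G (Finset.univ \ T) = m2 := by
    apply le_antisymm
    · apply Finset.sup_le
      intro w hw
      by_cases hwv : w = v
      · subst hwv; rw [hdegv]
      · calc degOn G (Finset.univ \ T) w ≤ degOn G Finset.univ w :=
              degOn_mono G _ _ Finset.sdiff_subset w
          _ ≤ m2 := Finset.le_sup (Finset.mem_erase.mpr ⟨hwv, Finset.mem_univ w⟩)
    · rw [← hdegv]
      exact Finset.le_sup (Finset.mem_sdiff.mpr ⟨Finset.mem_univ v, hvT⟩)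
  have hsub2 : ({v, u} : Finset V) ⊆ (Finset.univ \ T).filter
      (fun w => degOn G (Finset.univ \ T) w = maxDegOn G (Finset.univ \ T)) := by
    intro w hw
    simp only [Finset.mem_insert, Finset.mem_singleton] at hw
    rcases hw with rfl | rfl
    · exact Finset.mem_filter.mpr ⟨Finset.mem_sdiff.mpr ⟨Finset.mem_univ w, hvT⟩, by rw [hdegv, hmax]⟩
    · exact Finset.mem_filter.mpr ⟨Finset.mem_sdiff.mpr ⟨Finset.mem_univ w, huT⟩, by rw [hdegu, hmax]⟩
  have h22 : 2 ≤ ({v, u} : Finset V).card := by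
    rw [Finset.card_insert_of_notMem (by simpa using huv.symm), Finset.card_singleton]
  have hfin : 2 ≤ ((Finset.univ \ T).filter
      (fun w => degOn G (Finset.univ \ T) w = maxDegOn G (Finset.univ \ T))).card :=
    h22.trans (Finset.card_le_card hsub2)
  apply Nat.sInf_le
  refine ⟨T, Finset.subset_univ T, hTcard, ?_⟩
  have hgoal : equates G 2 (Finset.univ \ T) := Or.inr hfin
  have hsd : ∀ (i₁ i₂ : SDiff (Finset V)) (A B : Finset V)
      (h : @SDiff.sdiff _ i₁ A B = @SDiff.sdiff _ i₂ A B),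
      equates G 2 (@SDiff.sdiff _ i₂ A B) → equates G 2 (@SDiff.sdiff _ i₁ A B) := by
    intro i₁ i₂ A B h hh; rw [h]; exact hh
  exact hsd _ _ _ _ (by ext x; simp [Finset.mem_sdiff]) hgoal

/-- Lower bound from an equating set avoiding `v`. -/
lemma le_card_of_equates (hn : 2 ≤ Fintype.card V)
    (v : V) (hv : ∀ w, degOn G Finset.univ w ≤ degOn G Finset.univ v)
    (S : Finset V) (hS : equates G 2 (Finset.univ \ S)) (hvS : v ∉ S) :
    degOn G Finset.univ v - (Finset.univ.erase v).sup (degOn G Finset.univ) ≤ S.card := by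
  set D := degOn G Finset.univ v with hD
  set m2 := (Finset.univ.erase v).sup (degOn G Finset.univ) with hm2
  have hDle : D ≤ Fintype.card V - 1 := by
    have hsub : Finset.univ.filter (fun w => G.Adj v w) ⊆ Finset.univ.erase v := by
      intro w hw
      simp only [Finset.mem_filter] at hw
      exact Finset.mem_erase.mpr ⟨(G.ne_of_adj hw.2).symm, Finset.mem_univ w⟩
    have := Finset.card_le_card hsub
    rwa [Finset.card_erase_of_mem (Finset.mem_univ v), Finset.card_univ] at this
  rcases hS with hsmall | hbig
  · rw [Finset.card_sdiff_of_subset (Finset.subset_univ S), Finset.card_univ] at hsmall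
    have hScard : S.card ≤ Fintype.card V :=
      (Finset.card_le_card (Finset.subset_univ S)).trans_eq Finset.card_univ
    omega
  · have h2lt : 1 < ((Finset.univ \ S).filter
        (fun w => degOn G (Finset.univ \ S) w = maxDegOn G (Finset.univ \ S))).card :=
      lt_of_lt_of_le one_lt_two hbig
    obtain ⟨x, hx, hxv⟩ := Finset.exists_mem_ne h2lt v
    have hx' := Finset.mem_filter.mp hx
    have h1 : degOn G Finset.univ x ≤ m2 :=
      Finset.le_sup (Finset.mem_erase.mpr ⟨hxv, Finset.mem_univ x⟩)
    have h2 : degOn G (Finset.univ \ S) x ≤ degOn G Finset.univ x :=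
      degOn_mono G _ _ Finset.sdiff_subset x
    have h3 : degOn G (Finset.univ \ S) v ≤ maxDegOn G (Finset.univ \ S) :=
      Finset.le_sup (Finset.mem_sdiff.mpr ⟨Finset.mem_univ v, hvS⟩)
    have h4 : D - S.card ≤ degOn G (Finset.univ \ S) v := by
      rw [degOn_sdiff]
      have := Finset.le_card_sdiff S (Finset.univ.filter (fun w => G.Adj v w))
      have hcv : (Finset.univ.filter (fun w => G.Adj v w)).card = D := rfl
      omega
    have h5 : maxDegOn G (Finset.univ \ S) = degOn G (Finset.univ \ S) x := hx'.2.symm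
    omega

end aux

/-- For a graph `G` on `n ≥ 2` vertices and `v` a vertex of maximum
degree, either `f(G) = diff(G)`, or `v` belongs to every minimum 2-equating set of `G`
(and in the latter case `v` is the unique vertex of maximum degree). -/
theorem stmt1 {V : Type*} [Fintype V] [DecidableEq V] (G : SimpleGraph V)
    (hn : 2 ≤ Fintype.card V)
    (v : V) (hv : ∀ w, degOn G Finset.univ w ≤ degOn G Finset.univ v) :
    fk G 2 = diffDeg G ∨
      ((∀ S : Finset V, S.card = fk G 2 → equates G 2 (Finset.univ \ S) → v ∈ S) ∧
        (∀ w, degOn G Finset.univ w = degOn G Finset.univ v → w = v)) := by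

  by_cases h : (∀ S : Finset V, S.card = fk G 2 → equates G 2 (Finset.univ \ S) → v ∈ S) ∧
      (∀ w, degOn G Finset.univ w = degOn G Finset.univ v → w = v)
  · exact Or.inr h
  · left
    rw [diffDeg_eq G v hv]
    refine le_antisymm (fk_le G hn v hv) ?_
    rw [not_and_or] at h
    rcases h with hP | hQ
    · push_neg at hP
      obtain ⟨S, hScard, hSeq, hvS⟩ := hP
      rw [← hScard]
      exact le_card_of_equates G hn v hv S hSeq hvS
    · push_neg at hQ
      obtain ⟨w, hw, hwv⟩ := hQ
      have hm2 : (Finset.univ.erase v).sup (degOn G Finset.univ) = degOn G Finset.univ v :=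
        le_antisymm (Finset.sup_le fun x _ => hv x)
          (hw ▸ Finset.le_sup (Finset.mem_erase.mpr ⟨hwv, Finset.mem_univ w⟩))
      rw [hm2]
      simp
end

section
/- Let t ≥ 1 be an integer and let G be a finite simple graph on n ≥ 2 vertices whose maximum degree Δ satisfies C(t+1,2) + 1 ≤ Δ ≤ C(t+2,2), where C(m,2) = m(m−1)/2 denotes a binomial coefficient. Then f(G) ≤ t. -/
open Finset

variable {V : Type*}

open scoped Classical

namespace Stmt4Aux

variable (G : SimpleGraph V)

lemma filter_sdiff' (A S : Finset V) (p : V → Prop) :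
    (A \ S).filter p = A.filter p \ S := by
  ext a; simp only [mem_filter, mem_sdiff]; tauto

lemma degOn_mono {A B : Finset V} (h : A ⊆ B) (v : V) :
    degOn G A v ≤ degOn G B v :=
  Finset.card_le_card (Finset.filter_subset_filter _ h)

lemma fkOn_nonempty (A : Finset V) :
    {m | ∃ S, S ⊆ A ∧ S.card = m ∧ equates G 2 (A \ S)}.Nonempty :=
  ⟨A.card, A, Finset.Subset.refl A, rfl, Or.inl (by simp)⟩

lemma fkOn_le {A S : Finset V} (hS : S ⊆ A) (h : equates G 2 (A \ S)) :
    fkOn G 2 A ≤ S.card :=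
  Nat.sInf_le ⟨S, hS, rfl, h⟩

lemma fkOn_erase (A : Finset V) {v : V} (hv : v ∈ A) :
    fkOn G 2 A ≤ fkOn G 2 (A.erase v) + 1 := by
  obtain ⟨S, hS, hcard, heq⟩ := Nat.sInf_mem (fkOn_nonempty G (A.erase v))
  have hvS : v ∉ S := fun h => (Finset.mem_erase.mp (hS h)).1 rfl
  have h1 : A \ insert v S = A.erase v \ S := by
    ext a
    simp only [mem_sdiff, mem_insert, mem_erase, not_or]
    tauto
  have h2 : fkOn G 2 A ≤ (insert v S).card := by
    apply fkOn_le
    · intro a ha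
      rcases Finset.mem_insert.mp ha with rfl | h
      · exact hv
      · exact Finset.mem_of_mem_erase (hS h)
    · rw [h1]; exact heq
  rw [Finset.card_insert_of_notMem hvS] at h2
  unfold fkOn
  unfold fkOn at h2
  omega

lemma equates_of_le_one {A : Finset V} (hA : 2 ≤ A.card) (h : maxDegOn G A ≤ 1) :
    equates G 2 A := by
  right
  by_cases h0 : maxDegOn G A = 0
  · have hfA : A.filter (fun v => degOn G A v = maxDegOn G A) = A := by
      apply Finset.filter_true_of_mem
      intro x hx
      have h1 := Finset.le_sup (f := degOn G A) hx
      have h2 : degOn G A x ≤ maxDegOn G A := h1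
      omega
    rw [hfA]; exact hA
  · have h1 : maxDegOn G A = 1 := by omega
    have hne : A.Nonempty := by
      rw [← Finset.card_pos]; omega
    obtain ⟨x, hx, hxd⟩ := Finset.exists_mem_eq_sup A hne (degOn G A)
    have hxd1 : degOn G A x = 1 := by rw [← hxd]; exact h1
    have hfne : (A.filter fun w => G.Adj x w).Nonempty := by
      rw [← Finset.card_pos]
      have : degOn G A x = (A.filter fun w => G.Adj x w).card := rfl
      omega
    obtain ⟨y, hy⟩ := hfne
    have hyA : y ∈ A := (Finset.mem_filter.mp hy).1
    have hxy : G.Adj x y := (Finset.mem_filter.mp hy).2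
    have hyd : degOn G A y = 1 := by
      have h1le : 1 ≤ degOn G A y := by
        have hx' : x ∈ A.filter fun w => G.Adj y w := Finset.mem_filter.mpr ⟨hx, hxy.symm⟩
        have hc := Finset.card_pos.mpr ⟨x, hx'⟩
        have : degOn G A y = (A.filter fun w => G.Adj y w).card := rfl
        omega
      have hle : degOn G A y ≤ maxDegOn G A := Finset.le_sup hyA
      omega
    have hxyne : x ≠ y := fun e => G.loopless.irrefl x (e ▸ hxy)
    exact Finset.one_lt_card_iff.mpr
      ⟨x, y, Finset.mem_filter.mpr ⟨hx, by rw [hxd1, h1]⟩,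
        Finset.mem_filter.mpr ⟨hyA, by rw [hyd, h1]⟩, hxyne⟩

lemma main (t : ℕ) : ∀ (A : Finset V), 2 ≤ A.card →
    maxDegOn G A ≤ Nat.choose (t + 2) 2 → fkOn G 2 A ≤ t := by
  induction t with
  | zero =>
    intro A hA hmax
    have hmax1 : maxDegOn G A ≤ 1 := by simpa using hmax
    have heq : equates G 2 A := equates_of_le_one G hA hmax1
    have := fkOn_le G (Finset.empty_subset A) (by rwa [Finset.sdiff_empty])
    simpa using this
  | succ t ih =>
    intro A hA hmax
    set D := maxDegOn G A with hD
    by_cases htwo : 2 ≤ (A.filter fun v => degOn G A v = maxDegOn G A).card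
    · have heq : equates G 2 A := Or.inr htwo
      have h0 := fkOn_le G (Finset.empty_subset A) (by rwa [Finset.sdiff_empty])
      simp at h0
      omega
    · have hAne : A.Nonempty := by rw [← Finset.card_pos]; omega
      obtain ⟨v, hvA, hvD⟩ := Finset.exists_mem_eq_sup A hAne (degOn G A)
      -- hvD : D = degOn G A v
      set B := A.erase v with hB
      set d2 := B.sup (degOn G A) with hd2
      have hBne : B.Nonempty := by
        rw [← Finset.card_pos, hB, Finset.card_erase_of_mem hvA]; omega
      obtain ⟨u, huB, hud⟩ := Finset.exists_mem_eq_sup B hBne (degOn G A)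
      have huA : u ∈ A := Finset.mem_of_mem_erase huB
      have hune : u ≠ v := (Finset.mem_erase.mp huB).1
      have hud2 : degOn G A u = d2 := hud.symm
      have huleD : degOn G A u ≤ D := Finset.le_sup huA
      have hd2ne : d2 ≠ D := by
        intro h
        apply htwo
        exact Finset.one_lt_card_iff.mpr
          ⟨u, v, Finset.mem_filter.mpr ⟨huA, by rw [hud2, h]⟩,
            Finset.mem_filter.mpr ⟨hvA, hvD.symm⟩, hune⟩
      have hd2lt : d2 < D := lt_of_le_of_ne (hud2 ▸ huleD) hd2ne
      set Fv := A.filter (fun w => G.Adj v w) with hFv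
      set Fu := A.filter (fun w => G.Adj u w) with hFu
      have hFvcard : Fv.card = D := hvD.symm
      have hFucard : Fu.card = d2 := hud2
      have hvFv : v ∉ Fv := fun h => G.loopless.irrefl v (Finset.mem_filter.mp h).2
      have hAcard : D + 1 ≤ A.card := by
        have hsub : insert v Fv ⊆ A := Finset.insert_subset hvA (Finset.filter_subset _ _)
        have := Finset.card_le_card hsub
        rw [Finset.card_insert_of_notMem hvFv, hFvcard] at this
        omega
      by_cases hcase : D ≤ d2 + (t + 1)
      · -- delete D - d2 neighbours of v avoiding u and N(u)
        have hTle : (Fv ∩ (Fu ∪ {u, v})).card ≤ d2 := by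
          by_cases hadj : G.Adj v u
          · have hvFu : v ∈ Fu := Finset.mem_filter.mpr ⟨hvA, hadj.symm⟩
            have hd2pos : 1 ≤ d2 := by
              rw [← hFucard]; exact Finset.card_pos.mpr ⟨v, hvFu⟩
            have hsub : Fv ∩ (Fu ∪ {u, v}) ⊆ insert u (Fu.erase v) := by
              intro x hx
              obtain ⟨hx1, hx2⟩ := Finset.mem_inter.mp hx
              have hxv : x ≠ v := fun e => G.loopless.irrefl v (e ▸ (Finset.mem_filter.mp hx1).2)
              rcases Finset.mem_union.mp hx2 with h | h
              · exact Finset.mem_insert.mpr (Or.inr (Finset.mem_erase.mpr ⟨hxv, h⟩))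
              · rcases Finset.mem_insert.mp h with rfl | h
                · exact Finset.mem_insert_self _ _
                · rw [Finset.mem_singleton] at h; exact absurd h hxv
            calc (Fv ∩ (Fu ∪ {u, v})).card ≤ (insert u (Fu.erase v)).card :=
                  Finset.card_le_card hsub
              _ ≤ (Fu.erase v).card + 1 := Finset.card_insert_le _ _
              _ = d2 := by
                  rw [Finset.card_erase_of_mem hvFu, hFucard]; omega
          · have hsub : Fv ∩ (Fu ∪ {u, v}) ⊆ Fu := by
              intro x hx
              obtain ⟨hx1, hx2⟩ := Finset.mem_inter.mp hx
              have hadjx : G.Adj v x := (Finset.mem_filter.mp hx1).2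
              rcases Finset.mem_union.mp hx2 with h | h
              · exact h
              · exfalso
                rcases Finset.mem_insert.mp h with rfl | h
                · exact hadj hadjx
                · rw [Finset.mem_singleton] at h; exact G.ne_of_adj hadjx h.symm
            calc (Fv ∩ (Fu ∪ {u, v})).card ≤ Fu.card := Finset.card_le_card hsub
              _ = d2 := hFucard
        set E := Fv \ (Fu ∪ {u, v}) with hE
        have hEcard : D - d2 ≤ E.card := by
          have hsub : Fv ⊆ (Fv ∩ (Fu ∪ {u, v})) ∪ E := by
            intro x hx
            by_cases h : x ∈ Fu ∪ {u, v}
            · exact Finset.mem_union_left _ (Finset.mem_inter.mpr ⟨hx, h⟩)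
            · exact Finset.mem_union_right _ (Finset.mem_sdiff.mpr ⟨hx, h⟩)
          have h1 := Finset.card_le_card hsub
          have h2 := Finset.card_union_le (Fv ∩ (Fu ∪ {u, v})) E
          omega
        obtain ⟨S, hSE, hScard⟩ := Finset.exists_subset_card_eq hEcard
        have hSFv : S ⊆ Fv := hSE.trans Finset.sdiff_subset
        have hSA : S ⊆ A := hSFv.trans (Finset.filter_subset _ _)
        have hSnot : ∀ x ∈ S, x ∉ Fu ∪ {u, v} := fun x hx =>
          (Finset.mem_sdiff.mp (hSE hx)).2
        have hvS : v ∉ S := fun h =>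
          hSnot v h (Finset.mem_union_right _ (by simp))
        have huS : u ∉ S := fun h =>
          hSnot u h (Finset.mem_union_right _ (by simp))
        have hSFu : ∀ x ∈ S, x ∉ Fu := fun x hx h =>
          hSnot x hx (Finset.mem_union_left _ h)
        have hvA' : v ∈ A \ S := Finset.mem_sdiff.mpr ⟨hvA, hvS⟩
        have huA' : u ∈ A \ S := Finset.mem_sdiff.mpr ⟨huA, huS⟩
        have hdegv : degOn G (A \ S) v = d2 := by
          have h1 : degOn G (A \ S) v = (Fv \ S).card := by
            show ((A \ S).filter fun w => G.Adj v w).card = (Fv \ S).card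
            rw [filter_sdiff']
          rw [h1, Finset.card_sdiff_of_subset hSFv, hFvcard, hScard]
          omega
        have hdegu : degOn G (A \ S) u = d2 := by
          have h1 : degOn G (A \ S) u = (Fu \ S).card := by
            show ((A \ S).filter fun w => G.Adj u w).card = (Fu \ S).card
            rw [filter_sdiff']
          have h2 : Fu \ S = Fu := by
            apply Finset.sdiff_eq_self_of_disjoint
            rw [Finset.disjoint_right]
            intro x hx
            exact hSFu x hx
          rw [h1, h2, hFucard]
        have hother : ∀ x ∈ A \ S, degOn G (A \ S) x ≤ d2 := by
          intro x hx
          by_cases hxv : x = v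
          · subst hxv; rw [hdegv]
          · have hxB : x ∈ B := Finset.mem_erase.mpr ⟨hxv, (Finset.mem_sdiff.mp hx).1⟩
            calc degOn G (A \ S) x ≤ degOn G A x := degOn_mono G Finset.sdiff_subset x
              _ ≤ d2 := Finset.le_sup hxB
        have hmax' : maxDegOn G (A \ S) = d2 :=
          le_antisymm (Finset.sup_le hother) (hdegv ▸ Finset.le_sup hvA')
        have hequates : equates G 2 (A \ S) := Or.inr (Finset.one_lt_card_iff.mpr
          ⟨v, u, Finset.mem_filter.mpr ⟨hvA', by rw [hdegv, hmax']⟩,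
            Finset.mem_filter.mpr ⟨huA', by rw [hdegu, hmax']⟩, hune.symm⟩)
        have hfin := fkOn_le G hSA hequates
        rw [hScard] at hfin
        omega
      · -- d2 + t + 2 ≤ D : delete v and use induction
        push_neg at hcase
        have hBcard : 2 ≤ B.card := by
          rw [hB, Finset.card_erase_of_mem hvA]; omega
        have hBmax : maxDegOn G B ≤ Nat.choose (t + 2) 2 := by
          have h1 : maxDegOn G B ≤ d2 := by
            apply Finset.sup_le
            intro x hxB
            calc degOn G B x ≤ degOn G A x :=
                  degOn_mono G (Finset.erase_subset _ _) x
              _ ≤ d2 := Finset.le_sup hxB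
          have h2 : Nat.choose (t + 3) 2 = (t + 2) + Nat.choose (t + 2) 2 := by
            rw [show t + 3 = (t + 2) + 1 from rfl, Nat.choose_succ_succ,
              Nat.choose_one_right]
          have h3 : D ≤ Nat.choose (t + 3) 2 := hmax
          omega
        have hIH := ih B hBcard hBmax
        have hstep := fkOn_erase G A hvA
        rw [← hB] at hstep
        omega

end Stmt4Aux

/-- If `t ≥ 1` and `G` is a graph on `n ≥ 2` vertices whose maximum
degree `Δ` satisfies `C(t+1,2) + 1 ≤ Δ ≤ C(t+2,2)`, then `f(G) ≤ t`. -/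
theorem stmt4 {V : Type*} [Fintype V] (G : SimpleGraph V) (t : ℕ) (ht : 1 ≤ t)
    (hn : 2 ≤ Fintype.card V)
    (hlo : Nat.choose (t + 1) 2 + 1 ≤ maxDegOn G Finset.univ)
    (hhi : maxDegOn G Finset.univ ≤ Nat.choose (t + 2) 2) :
    fk G 2 ≤ t := by
  have h := Stmt4Aux.main G t Finset.univ (by rwa [Finset.card_univ]) hhi
  exact h
end

section
/- For every integer t ≥ 1 and every integer Δ with C(t+1,2) + 1 ≤ Δ ≤ C(t+2,2) (where C(m,2) = m(m−1)/2), there exists a finite simple graph G with maximum degree exactly Δ such that f(G) = t. (One such graph is the disjoint union of the stars K_{1,a_j} for j = 1, …, t−1, where a_j = C(j+1,2) + 1, together with the star K_{1,Δ}.) -/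
open Finset

variable {V : Type*}

section transport
variable {W : Type*} (e : V ≃ W) (G : SimpleGraph V)

open scoped Classical

lemma degOn_map (A : Finset V) (v : V) :
    degOn (G.map e.toEmbedding) (A.map e.toEmbedding) (e v) = degOn G A v := by
  classical
  unfold degOn
  simp only [Finset.filter_map, Finset.card_map]
  congr 1
  ext w
  simp only [Finset.mem_filter]
  refine and_congr_right fun _ => ?_
  simp only [Function.comp_apply, Equiv.toEmbedding_apply, SimpleGraph.map_adj]
  constructor
  · rintro ⟨a, b, hab, ha, hb⟩
    rwa [e.injective ha, e.injective hb] at hab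
  · intro h; exact ⟨v, w, h, rfl, rfl⟩

lemma maxDegOn_map (A : Finset V) :
    maxDegOn (G.map e.toEmbedding) (A.map e.toEmbedding) = maxDegOn G A := by
  unfold maxDegOn
  rw [Finset.sup_map]
  apply Finset.sup_congr rfl
  intro v _
  exact degOn_map e G A v

lemma equates_map (A : Finset V) (k : ℕ) :
    equates (G.map e.toEmbedding) k (A.map e.toEmbedding) ↔ equates G k A := by
  classical
  unfold equates
  rw [Finset.card_map, Finset.filter_map, Finset.card_map]
  have : Finset.filter ((fun v => degOn (G.map e.toEmbedding) (A.map e.toEmbedding) v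
        = maxDegOn (G.map e.toEmbedding) (A.map e.toEmbedding)) ∘ e.toEmbedding) A
      = Finset.filter (fun v => degOn G A v = maxDegOn G A) A := by
    apply Finset.filter_congr
    intro v _
    simp only [Function.comp_apply, Equiv.toEmbedding_apply, degOn_map, maxDegOn_map]
  rw [this]

lemma fk_map [Fintype V] [Fintype W] : fk (G.map e.toEmbedding) k = fk G k := by
  classical
  unfold fk fkOn
  congr 1
  ext m
  constructor
  · rintro ⟨S, hS, hcard, heq⟩
    refine ⟨S.map e.symm.toEmbedding, Finset.subset_univ _, by rw [Finset.card_map, hcard], ?_⟩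
    rw [← equates_map e G]
    have h2 : ((Finset.univ : Finset V) \ S.map e.symm.toEmbedding).map e.toEmbedding
        = Finset.univ \ S := by
      ext w; simp
    rwa [h2]
  · rintro ⟨S, hS, hcard, heq⟩
    refine ⟨S.map e.toEmbedding, Finset.subset_univ _, by rw [Finset.card_map, hcard], ?_⟩
    have : (Finset.univ : Finset W) \ S.map e.toEmbedding
        = ((Finset.univ : Finset V) \ S).map e.toEmbedding := by
      ext w; simp
    rw [this, equates_map]
    exact heq

end transport

section stars
open scoped Classical
variable (t : ℕ) (b : Fin t → ℕ)

abbrev SV : Type := Fin t ⊕ (Σ i : Fin t, Fin (b i))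

instance : Fintype (SV t b) := inferInstanceAs (Fintype (Fin t ⊕ (Σ i : Fin t, Fin (b i))))

def SG : SimpleGraph (SV t b) where
  Adj x y := match x, y with
    | Sum.inl i, Sum.inr p => p.1 = i
    | Sum.inr p, Sum.inl i => p.1 = i
    | _, _ => False
  symm := ⟨by rintro (i | p) (j | q) h <;> simp_all⟩
  loopless := ⟨by rintro (i | p) h <;> exact h⟩

lemma SG_adj_inl_inr (i : Fin t) (p : Σ i : Fin t, Fin (b i)) :
    (SG t b).Adj (Sum.inl i) (Sum.inr p) ↔ p.1 = i := Iff.rfl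

lemma SG_adj_inl_inl (i j : Fin t) : ¬ (SG t b).Adj (Sum.inl i) (Sum.inl j) := fun h => h

lemma SG_adj_inr_inr (p q : Σ i : Fin t, Fin (b i)) :
    ¬ (SG t b).Adj (Sum.inr p) (Sum.inr q) := fun h => h

lemma SG_adj_inr_inl (p : Σ i : Fin t, Fin (b i)) (i : Fin t) :
    (SG t b).Adj (Sum.inr p) (Sum.inl i) ↔ p.1 = i := Iff.rfl

open scoped Classical in
lemma SG_nbhd (j : Fin t) :
    (univ.filter fun w => (SG t b).Adj (Sum.inl j) w) =
      (univ : Finset (Fin (b j))).map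
        ⟨fun k => Sum.inr ⟨j, k⟩, by intro a c h; simpa using h⟩ := by
  ext w
  rcases w with i | ⟨i, k⟩
  · simp [SG_adj_inl_inl]
  · simp only [mem_filter, mem_univ, true_and, mem_map, Function.Embedding.coeFn_mk,
      SG_adj_inl_inr]
    constructor
    · rintro rfl; exact ⟨k, rfl⟩
    · rintro ⟨k', hk⟩
      cases hk; rfl

open scoped Classical in
lemma SG_nbhd_card (j : Fin t) :
    (univ.filter fun w => (SG t b).Adj (Sum.inl j) w).card = b j := by
  rw [SG_nbhd]; simp

open scoped Classical in
lemma SG_nbhd_leaf (p : Σ i : Fin t, Fin (b i)) :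
    (univ.filter fun w => (SG t b).Adj (Sum.inr p) w) = {Sum.inl p.1} := by
  ext w
  rcases w with i | q
  · simp only [mem_filter, mem_univ, true_and, SG_adj_inr_inl, mem_singleton, Sum.inl.injEq]
    exact ⟨fun h => h ▸ rfl, fun h => h.symm⟩
  · simp [SG_adj_inr_inr]

lemma degOn_le_degOn_univ [Fintype V] (G : SimpleGraph V) (A : Finset V) (v : V) :
    degOn G A v ≤ degOn G univ v := by
  classical
  exact card_le_card (filter_subset_filter _ (subset_univ A))

lemma degOn_univ_center (j : Fin t) : degOn (SG t b) univ (Sum.inl j) = b j :=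
  SG_nbhd_card t b j

lemma degOn_univ_leaf (p : Σ i : Fin t, Fin (b i)) :
    degOn (SG t b) univ (Sum.inr p) = 1 := by
  unfold degOn
  rw [SG_nbhd_leaf]
  simp

lemma degOn_leaf_le (A : Finset (SV t b)) (p : Σ i : Fin t, Fin (b i)) :
    degOn (SG t b) A (Sum.inr p) ≤ 1 := by
  calc degOn (SG t b) A (Sum.inr p) ≤ degOn (SG t b) univ (Sum.inr p) :=
        degOn_le_degOn_univ _ _ _
    _ = 1 := degOn_univ_leaf t b p

open scoped Classical in
lemma center_deg_lower (S : Finset (SV t b)) (j : Fin t) :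
    b j ≤ degOn (SG t b) (univ \ S) (Sum.inl j) +
      (S.filter fun w => (SG t b).Adj (Sum.inl j) w).card := by
  have hsub : (univ.filter fun w => (SG t b).Adj (Sum.inl j) w) ⊆
      ((univ \ S).filter fun w => (SG t b).Adj (Sum.inl j) w) ∪
        (S.filter fun w => (SG t b).Adj (Sum.inl j) w) := by
    intro w hw
    simp only [mem_filter, mem_univ, true_and] at hw
    by_cases hwS : w ∈ S
    · exact mem_union_right _ (mem_filter.2 ⟨hwS, hw⟩)
    · exact mem_union_left _ (mem_filter.2 ⟨mem_sdiff.2 ⟨mem_univ _, hwS⟩, hw⟩)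
  calc b j = (univ.filter fun w => (SG t b).Adj (Sum.inl j) w).card :=
        (SG_nbhd_card t b j).symm
    _ ≤ _ := le_trans (card_le_card hsub) (card_union_le _ _)

lemma card_SV : Fintype.card (SV t b) = t + ∑ i, b i := by
  show Fintype.card (Fin t ⊕ (Σ i : Fin t, Fin (b i))) = _
  simp

end stars
section main
open scoped Classical

variable (t : ℕ) (b : Fin t → ℕ)

lemma no_equates (ht : 1 ≤ t)
    (Hgap : ∀ i j : Fin t, i < j → b i + (j : ℕ) + 1 ≤ b j)
    (Hbig : ∀ j : Fin t, (j : ℕ) + 2 ≤ b j)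
    (S : Finset (SV t b)) (hS : S.card < t) :
    ¬ equates (SG t b) 2 (univ \ S) := by
  set A := (univ : Finset (SV t b)) \ S with hA
  -- cardinality of A is at least 2
  have hb2 : ∀ i : Fin t, 2 ≤ b i := fun i => le_trans (by omega) (Hbig i)
  have hsum : 2 * t ≤ ∑ i, b i := by
    calc 2 * t = ∑ _i : Fin t, 2 := by simp [mul_comm]
      _ ≤ ∑ i, b i := Finset.sum_le_sum fun i _ => hb2 i
  have hcardA : A.card = (t + ∑ i, b i) - S.card := by
    rw [hA, card_sdiff_of_subset (subset_univ S), card_univ, card_SV]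
  have hA2 : 2 ≤ A.card := by omega
  -- a surviving centre exists
  have hTne : (univ.filter fun i : Fin t => Sum.inl i ∉ S).Nonempty := by
    by_contra h
    rw [not_nonempty_iff_eq_empty, filter_eq_empty_iff] at h
    push_neg at h
    have hsub : (univ.map ⟨Sum.inl, Sum.inl_injective⟩ : Finset (SV t b)) ⊆ S := by
      intro w hw
      simp only [mem_map, mem_univ, true_and, Function.Embedding.coeFn_mk] at hw
      obtain ⟨i, rfl⟩ := hw
      exact h (mem_univ i)
    have := card_le_card hsub
    simp at this
    omega
  obtain ⟨j, hjmem, hjge⟩ : ∃ j ∈ (univ.filter fun i : Fin t => Sum.inl i ∉ S),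
      ∀ i ∈ (univ.filter fun i : Fin t => Sum.inl i ∉ S), i ≤ j :=
    ⟨_, Finset.max'_mem _ hTne, fun i hi => Finset.le_max' _ i hi⟩
  have hjS : Sum.inl j ∉ S := by
    simp only [Finset.mem_filter] at hjmem
    exact hjmem.2
  have hjA : Sum.inl j ∈ A := by
    simp only [hA, Finset.mem_sdiff]
    exact ⟨mem_univ _, hjS⟩
  have hjmax : ∀ i : Fin t, j < i → Sum.inl i ∈ S := by
    intro i hi
    by_contra h
    refine absurd (hjge i ?_) (not_le.2 hi)
    simp only [Finset.mem_filter]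
    exact ⟨mem_univ _, h⟩
  -- the set of deleted centres above j
  have hCs_sub : ((Ioi j).map ⟨Sum.inl, Sum.inl_injective⟩ : Finset (SV t b)) ⊆ S := by
    intro w hw
    simp only [mem_map, Function.Embedding.coeFn_mk, mem_Ioi] at hw
    obtain ⟨i, hi, rfl⟩ := hw
    exact hjmax i hi
  have hCs_card : ((Ioi j).map ⟨Sum.inl, Sum.inl_injective⟩ : Finset (SV t b)).card
      = t - 1 - (j : ℕ) := by
    rw [card_map, Fin.card_Ioi]
  have hdisj : Disjoint (S.filter fun w => (SG t b).Adj (Sum.inl j) w)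
      ((Ioi j).map ⟨Sum.inl, Sum.inl_injective⟩ : Finset (SV t b)) := by
    rw [Finset.disjoint_left]
    intro w hw hw'
    simp only [mem_map, Function.Embedding.coeFn_mk, mem_Ioi] at hw'
    obtain ⟨i, _, rfl⟩ := hw'
    simp only [Finset.mem_filter] at hw
    exact SG_adj_inl_inl t b j i hw.2
  have hLS : (S.filter fun w => (SG t b).Adj (Sum.inl j) w).card ≤ (j : ℕ) := by
    have hsub : (S.filter fun w => (SG t b).Adj (Sum.inl j) w) ∪
        ((Ioi j).map ⟨Sum.inl, Sum.inl_injective⟩ : Finset (SV t b)) ⊆ S :=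
      union_subset (filter_subset _ _) hCs_sub
    have := card_le_card hsub
    rw [card_union_of_disjoint hdisj, hCs_card] at this
    have hjt : (j : ℕ) < t := j.isLt
    omega
  -- degree of the surviving centre
  have hdegj : b j ≤ degOn (SG t b) A (Sum.inl j) + (j : ℕ) :=
    le_trans (center_deg_lower t b S j)
      (Nat.add_le_add_left hLS _)
  -- all other vertices have strictly smaller degree
  have hlt : ∀ v ∈ A, v ≠ Sum.inl j →
      degOn (SG t b) A v < degOn (SG t b) A (Sum.inl j) := by
    intro v hv hne
    rcases v with i | p
    · have hne' : i ≠ j := fun h => hne (by rw [h])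
      have hij : i < j := by
        rcases lt_or_gt_of_ne hne' with h | h
        · exact h
        · simp only [hA, Finset.mem_sdiff] at hv
          exact absurd hv.2 (not_not.2 (hjmax i h))
      have h1 : degOn (SG t b) A (Sum.inl i) ≤ b i := by
        calc degOn (SG t b) A (Sum.inl i) ≤ degOn (SG t b) univ (Sum.inl i) :=
              degOn_le_degOn_univ _ _ _
          _ = b i := degOn_univ_center t b i
      have h2 := Hgap i j hij
      omega
    · have h1 := degOn_leaf_le t b A p
      have h2 := Hbig j
      omega
  -- conclude
  rintro (hcard | hfilter)
  · omega
  · obtain ⟨x, hx, y, hy, hxy⟩ := Finset.one_lt_card.1 hfilter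
    simp only [Finset.mem_filter] at hx hy
    have hmax : degOn (SG t b) A (Sum.inl j) ≤ maxDegOn (SG t b) A := le_sup hjA
    rcases eq_or_ne x (Sum.inl j) with rfl | hxj
    · have hy' := hlt y hy.1 (by rintro rfl; exact hxy rfl)
      rw [hy.2] at hy'
      omega
    · have hx' := hlt x hx.1 hxj
      rw [hx.2] at hx'
      omega

lemma equates_centers (ht : 1 ≤ t) (hb2 : ∀ i : Fin t, 2 ≤ b i) :
    equates (SG t b) 2
      ((univ : Finset (SV t b)) \ univ.map ⟨Sum.inl, Sum.inl_injective⟩) := by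
  set A := (univ : Finset (SV t b)) \ univ.map ⟨Sum.inl, Sum.inl_injective⟩ with hA
  have hmem : ∀ v, v ∈ A ↔ ∃ p, v = Sum.inr p := by
    intro v
    rw [hA, mem_sdiff]
    rcases v with i | p
    · simp
    · simp
  have hdeg0 : ∀ v ∈ A, degOn (SG t b) A v = 0 := by
    intro v hv
    obtain ⟨p, rfl⟩ := (hmem v).1 hv
    unfold degOn
    rw [card_eq_zero, filter_eq_empty_iff]
    intro w hw hadj
    rcases w with i | q
    · exact absurd ((hmem _).1 hw) (by simp)
    · exact SG_adj_inr_inr t b p q hadj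
  have hmax : maxDegOn (SG t b) A = 0 := by
    apply Nat.le_zero.1
    apply Finset.sup_le
    intro v hv
    exact le_of_eq (hdeg0 v hv)
  right
  refine le_trans ?_ (Finset.card_le_card
    (fun v hv => Finset.mem_filter.2 ⟨hv, by rw [hdeg0 v hv, hmax]⟩))
  have hcard : A.card = ∑ i, b i := by
    rw [hA, card_sdiff_of_subset]
    · rw [card_univ, card_SV, card_map, card_univ, Fintype.card_fin]
      omega
    · exact subset_univ _
  have hsum : 2 * t ≤ ∑ i, b i := by
    calc 2 * t = ∑ _i : Fin t, 2 := by simp [mul_comm]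
      _ ≤ ∑ i, b i := Finset.sum_le_sum fun i _ => hb2 i
  omega

lemma fk_SG (ht : 1 ≤ t)
    (Hgap : ∀ i j : Fin t, i < j → b i + (j : ℕ) + 1 ≤ b j)
    (Hbig : ∀ j : Fin t, (j : ℕ) + 2 ≤ b j) :
    fk (SG t b) 2 = t := by
  have hb2 : ∀ i : Fin t, 2 ≤ b i := fun i => le_trans (by omega) (Hbig i)
  have hmem : t ∈ {m | ∃ S, S ⊆ (univ : Finset (SV t b)) ∧ S.card = m ∧
      equates (SG t b) 2 (univ \ S)} := by
    refine ⟨univ.map ⟨Sum.inl, Sum.inl_injective⟩, subset_univ _, ?_, ?_⟩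
    · rw [card_map, card_univ, Fintype.card_fin]
    · exact equates_centers t b ht hb2
  unfold fk fkOn
  apply le_antisymm
  · exact Nat.sInf_le (by convert hmem)
  · apply le_csInf ⟨t, by convert hmem⟩
    rintro m ⟨S, _, rfl, heq⟩
    by_contra h
    push_neg at h
    exact no_equates t b ht Hgap Hbig S h (by convert heq)

lemma maxDeg_SG (jm : Fin t) (HM : ∀ i, b i ≤ b jm) (H1 : 1 ≤ b jm) :
    maxDegOn (SG t b) univ = b jm := by
  apply le_antisymm
  · apply Finset.sup_le
    intro v _
    rcases v with i | p
    · rw [degOn_univ_center]; exact HM i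
    · rw [degOn_univ_leaf]; exact H1
  · calc b jm = degOn (SG t b) univ (Sum.inl jm) := (degOn_univ_center t b jm).symm
      _ ≤ _ := le_sup (mem_univ _)

end main

section final
open scoped Classical

/-- For every `t ≥ 1` and every `Δ` with `C(t+1,2) + 1 ≤ Δ ≤ C(t+2,2)`,
there is a finite simple graph `G` with maximum degree exactly `Δ` and `f(G) = t`. -/
theorem stmt6 (t Δ : ℕ) (ht : 1 ≤ t)
    (hlo : Nat.choose (t + 1) 2 + 1 ≤ Δ) (hhi : Δ ≤ Nat.choose (t + 2) 2) :
    ∃ (n : ℕ) (G : SimpleGraph (Fin n)),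
      maxDegOn G Finset.univ = Δ ∧ fk G 2 = t := by
  have ht1 : t - 1 < t := by omega
  set jm : Fin t := ⟨t - 1, ht1⟩ with hjm
  set b : Fin t → ℕ := fun i => if (i : ℕ) = t - 1 then Δ else ((i : ℕ) + 2).choose 2 + 1
    with hb
  have hbjm : b jm = Δ := by simp [hb, hjm]
  have hgap : ∀ i j : Fin t, i < j → b i + (j : ℕ) + 1 ≤ b j := by
    intro i j hij
    have hij' : (i : ℕ) < (j : ℕ) := hij
    have hjt : (j : ℕ) < t := j.isLt
    have hbi : b i = ((i : ℕ) + 2).choose 2 + 1 := by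
      have hne : ¬ ((i : ℕ) = t - 1) := by omega
      simp [hb, hne]
    by_cases hjl : (j : ℕ) = t - 1
    · have hbj : b j = Δ := by simp [hb, hjl]
      have h1 : ((i : ℕ) + 2).choose 2 ≤ t.choose 2 := Nat.choose_le_choose 2 (by omega)
      have h2 : (t + 1).choose 2 = t.choose 1 + t.choose 2 := Nat.choose_succ_succ t 1
      rw [Nat.choose_one_right] at h2
      omega
    · have hbj : b j = ((j : ℕ) + 2).choose 2 + 1 := by simp [hb, hjl]
      have h2 : ((j : ℕ) + 2).choose 2 = ((j : ℕ) + 1).choose 1 + ((j : ℕ) + 1).choose 2 :=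
        Nat.choose_succ_succ _ 1
      rw [Nat.choose_one_right] at h2
      have h1 : ((i : ℕ) + 2).choose 2 ≤ ((j : ℕ) + 1).choose 2 :=
        Nat.choose_le_choose 2 (by omega)
      omega
  have hbig : ∀ j : Fin t, (j : ℕ) + 2 ≤ b j := by
    intro j
    have hjt : (j : ℕ) < t := j.isLt
    by_cases hjl : (j : ℕ) = t - 1
    · have hbj : b j = Δ := by simp [hb, hjl]
      have h2 : (t + 1).choose 2 = t.choose 1 + t.choose 2 := Nat.choose_succ_succ t 1
      rw [Nat.choose_one_right] at h2
      omega
    · have hbj : b j = ((j : ℕ) + 2).choose 2 + 1 := by simp [hb, hjl]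
      have h2 : ((j : ℕ) + 2).choose 2 = ((j : ℕ) + 1).choose 1 + ((j : ℕ) + 1).choose 2 :=
        Nat.choose_succ_succ _ 1
      rw [Nat.choose_one_right] at h2
      omega
  have hM : ∀ i : Fin t, b i ≤ b jm := by
    intro i
    have hit : (i : ℕ) < t := i.isLt
    rw [hbjm]
    by_cases hil : (i : ℕ) = t - 1
    · simp [hb, hil]
    · have hbi : b i = ((i : ℕ) + 2).choose 2 + 1 := by simp [hb, hil]
      have h1 : ((i : ℕ) + 2).choose 2 ≤ (t + 1).choose 2 := Nat.choose_le_choose 2 (by omega)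
      omega
  have h1bjm : 1 ≤ b jm := by rw [hbjm]; omega
  refine ⟨Fintype.card (SV t b),
    (SG t b).map (Fintype.equivFin (SV t b)).toEmbedding, ?_, ?_⟩
  · have hmap := maxDegOn_map (Fintype.equivFin (SV t b)) (SG t b) Finset.univ
    rw [Finset.map_univ_equiv] at hmap
    rw [hmap, maxDeg_SG t b jm hM h1bjm, hbjm]
  · rw [fk_map (Fintype.equivFin (SV t b)) (SG t b), fk_SG t b ht hgap hbig]

end final
end

section
/- For every integer t ≥ 1 and every integer n with C(t+1,2) + 3 ≤ n ≤ C(t+2,2) + 2 (where C(m,2) = m(m−1)/2), there exists a finite simple graph G on exactly n vertices with f(G) = t. -/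
open Finset

variable {V : Type*}

def cf (t a : ℕ) : ℕ := (t - a).choose 2 + 2 + (if a = 0 ∨ a + 1 < t then 1 else 0)

def RR (t u v : ℕ) : Prop :=
  (u < t ∧ v < t ∧ (u + 2 ≤ v ∨ v + 2 ≤ u)) ∨
  (u < t ∧ t ≤ v ∧ v < t + cf t u) ∨
  (v < t ∧ t ≤ u ∧ u < t + cf t v)

instance RR.dec : ∀ t u v, Decidable (RR t u v) := fun t u v => by
  unfold RR; infer_instance

def GG (t n : ℕ) : SimpleGraph (Fin n) where
  Adj x y := RR t x.val y.val
  symm := by constructor; intro x y h; unfold RR at *; tauto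
  loopless := by constructor; intro x h; rcases h with h | h | h <;> omega

instance GG.dec (t n : ℕ) : DecidableRel (GG t n).Adj := fun x y => RR.dec t x.val y.val

lemma choose2_succ (u : ℕ) : (u + 1).choose 2 = u.choose 2 + u := by
  simp [Nat.choose]; omega

lemma cf_anti {t : ℕ} {a b : ℕ} (hab : a ≤ b) (hbt : b < t) : cf t b ≤ cf t a := by
  rcases eq_or_lt_of_le hab with rfl | h
  · exact le_rfl
  · unfold cf
    have h1 : (t - b).choose 2 ≤ (t - a).choose 2 := Nat.choose_le_choose 2 (by omega)
    have h2 : (if a = 0 ∨ a + 1 < t then 1 else 0) = 1 := by rw [if_pos]; omega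
    rw [h2]
    have : (if b = 0 ∨ b + 1 < t then 1 else 0) ≤ 1 := by split_ifs <;> omega
    omega

lemma cf_le (t a : ℕ) (ha : a < t) : cf t a ≤ t.choose 2 + 3 := by
  have h1 := cf_anti (Nat.zero_le a) ha
  have h2 : cf t 0 = t.choose 2 + 3 := by
    unfold cf; rw [if_pos (Or.inl rfl)]; simp
  omega

lemma AR1 {t a b s : ℕ} (hab : a < b) (hbt : b < t) (has : a ≤ s) (hst : s < t) :
    (b - 1 - a) + (t - (b + 2)) + cf t b < (t - (a + 2)) + cf t a - (s - a) := by
  unfold cf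
  have h2 : (t - a).choose 2 = (t - a - 1).choose 2 + (t - a - 1) := by
    have h : t - a = (t - a - 1) + 1 := by omega
    rw [h, choose2_succ]; simp
  have h1 : (t - b).choose 2 ≤ (t - a - 1).choose 2 := Nat.choose_le_choose 2 (by omega)
  have hpa : (if a = 0 ∨ a + 1 < t then 1 else 0) = 1 := by rw [if_pos]; omega
  rw [hpa]
  split_ifs with hb
  · omega
  · have hv : t - b = 1 := by omega
    rw [hv] at h1 ⊢
    simp [Nat.choose] at h1 ⊢
    omega

lemma AR2 {t a s : ℕ} (ha : a < t) (has : a ≤ s) (hst : s < t) :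
    t - a < (t - (a + 2)) + cf t a - (s - a) := by
  unfold cf
  have h2 : (t - a).choose 2 = (t - a - 1).choose 2 + (t - a - 1) := by
    have h : t - a = (t - a - 1) + 1 := by omega
    rw [h, choose2_succ]; simp
  split_ifs with hb <;> omega

lemma card_val_filter (n : ℕ) (P : ℕ → Prop) [DecidablePred P] :
    (univ.filter fun x : Fin n => P x.val).card = ((Finset.range n).filter P).card := by
  apply Finset.card_nbij (i := fun x => x.val)
  · intro x hx
    simp only [mem_filter, mem_univ, true_and, mem_range] at *
    exact Finset.mem_coe.mpr (mem_filter.mpr ⟨mem_range.mpr x.isLt, by simpa using hx⟩)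
  · intro x hx y hy h
    exact Fin.ext h
  · intro u hu
    simp only [mem_coe, mem_filter, mem_range] at hu
    exact ⟨⟨u, hu.1⟩, by simp [hu.2], rfl⟩

lemma card_val_Ico (n lo hi : ℕ) (h : hi ≤ n) :
    (univ.filter fun x : Fin n => lo ≤ x.val ∧ x.val < hi).card = hi - lo := by
  rw [card_val_filter n (fun u => lo ≤ u ∧ u < hi)]
  have e : (Finset.range n).filter (fun u => lo ≤ u ∧ u < hi) = Finset.Ico lo hi := by
    ext u; simp only [mem_filter, mem_range, mem_Ico]; omega
  rw [e, Nat.card_Ico]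

lemma card_val_lt (n hi : ℕ) (h : hi ≤ n) :
    (univ.filter fun x : Fin n => x.val < hi).card = hi := by
  rw [card_val_filter n (fun u => u < hi)]
  have e : (Finset.range n).filter (fun u => u < hi) = Finset.range hi := by
    ext u; simp only [mem_filter, mem_range]; omega
  rw [e, card_range]

lemma degOn_eq {n : ℕ} (G : SimpleGraph (Fin n)) [DecidableRel G.Adj] (S : Finset (Fin n))
    (v : Fin n) :
    degOn G (univ \ S) v = ((univ.filter fun w => G.Adj v w) \ S).card := by
  unfold degOn
  congr 1
  ext w
  simp only [mem_filter, mem_sdiff, mem_univ, true_and]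
  tauto

lemma lower (t n : ℕ) (ht : 1 ≤ t) (hn : (t + 1).choose 2 + 3 ≤ n)
    (S : Finset (Fin n)) (hs : S.card < t) : ¬ equates (GG t n) 2 (univ \ S) := by
  classical
  have hc2 := choose2_succ t
  have hn' : t.choose 2 + t + 3 ≤ n := by omega
  have htn : t ≤ n := by
    have := Nat.zero_le (t.choose 2); omega
  have hcfn : ∀ a, a < t → t + cf t a ≤ n := by
    intro a ha; have := cf_le t a ha; omega
  -- minimal chain vertex not in S
  have hne : ((univ.filter fun x : Fin n => x.val < t) \ S).Nonempty := by
    rw [Finset.nonempty_iff_ne_empty]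
    intro hemp
    have hsub : (univ.filter fun x : Fin n => x.val < t) ⊆ S :=
      Finset.sdiff_eq_empty_iff_subset.mp hemp
    have := Finset.card_le_card hsub
    rw [card_val_lt n t htn] at this
    omega
  obtain ⟨x, hx, hmin⟩ := Finset.exists_min_image _ (fun y => y.val) hne
  have hxt : x.val < t := (mem_filter.mp (mem_sdiff.mp hx).1).2
  have hxS : x ∉ S := (mem_sdiff.mp hx).2
  set a := x.val with ha_def
  set P : Finset (Fin n) := univ.filter (fun y : Fin n => y.val < a) with hP_def
  have hPS : P ⊆ S := by
    intro y hy
    have hyv : y.val < a := (mem_filter.mp hy).2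
    by_contra hyS
    have hymem : y ∈ (univ.filter fun x : Fin n => x.val < t) \ S :=
      mem_sdiff.mpr ⟨mem_filter.mpr ⟨mem_univ _, by omega⟩, hyS⟩
    exact absurd (hmin y hymem) (by omega)
  have hPcard : P.card = a := card_val_lt n a (by omega)
  have haS : a ≤ S.card := by
    have := Finset.card_le_card hPS; omega
  have hSP : (S \ P).card = S.card - a := by rw [card_sdiff_of_subset hPS, hPcard]
  set A := univ \ S with hA_def
  have hxA : x ∈ A := mem_sdiff.mpr ⟨mem_univ _, hxS⟩
  -- lower bound on degOn x
  have hLB : (t - (a + 2)) + cf t a - (S.card - a) ≤ degOn (GG t n) A x := by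
    rw [degOn_eq]
    set D : Finset (Fin n) := univ.filter
      (fun y : Fin n => (a + 2 ≤ y.val ∧ y.val < t) ∨ (t ≤ y.val ∧ y.val < t + cf t a))
      with hD_def
    have hDN : D ⊆ univ.filter fun w => (GG t n).Adj x w := by
      intro y hy
      have hy' := (mem_filter.mp hy).2
      refine mem_filter.mpr ⟨mem_univ _, ?_⟩
      show RR t x.val y.val
      rcases hy' with ⟨h1, h2⟩ | ⟨h1, h2⟩
      · exact Or.inl ⟨hxt, h2, Or.inl h1⟩
      · exact Or.inr (Or.inl ⟨hxt, h1, h2⟩)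
    have hmono : (D \ S).card ≤ ((univ.filter fun w => (GG t n).Adj x w) \ S).card :=
      Finset.card_le_card (Finset.sdiff_subset_sdiff hDN Subset.rfl)
    have hDcard : D.card = (t - (a + 2)) + cf t a := by
      have hsplit : D = (univ.filter fun y : Fin n => a + 2 ≤ y.val ∧ y.val < t) ∪
          (univ.filter fun y : Fin n => t ≤ y.val ∧ y.val < t + cf t a) := by
        ext y
        simp only [hD_def, mem_filter, mem_union, mem_univ, true_and] <;> tauto
      have hdisj : Disjoint (univ.filter fun y : Fin n => a + 2 ≤ y.val ∧ y.val < t)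
          (univ.filter fun y : Fin n => t ≤ y.val ∧ y.val < t + cf t a) := by
        rw [Finset.disjoint_left]
        intro y h1 h2
        have := (mem_filter.mp h1).2
        have := (mem_filter.mp h2).2
        omega
      rw [hsplit, Finset.card_union_of_disjoint hdisj,
        card_val_Ico n (a + 2) t htn, card_val_Ico n t (t + cf t a) (hcfn a hxt)]
      try omega
    have hinter : D ∩ S ⊆ S \ P := by
      intro y hy
      obtain ⟨hyD, hyS⟩ := mem_inter.mp hy
      have := (mem_filter.mp hyD).2
      refine mem_sdiff.mpr ⟨hyS, ?_⟩
      intro hyP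
      have := (mem_filter.mp hyP).2
      omega
    have hDS : (D \ S).card = D.card - (D ∩ S).card := by
      rw [← Finset.sdiff_inter_self_left]
      exact card_sdiff_of_subset Finset.inter_subset_left
    have hintcard : (D ∩ S).card ≤ S.card - a := by
      have := Finset.card_le_card hinter; omega
    omega
  -- key: strict max
  have key : ∀ w ∈ A, w ≠ x → degOn (GG t n) A w < degOn (GG t n) A x := by
    intro w hwA hwx
    have hwS : w ∉ S := (mem_sdiff.mp hwA).2
    have hUB : degOn (GG t n) A w ≤ ((univ.filter fun y => (GG t n).Adj w y) \ P).card := by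
      rw [degOn_eq]
      exact Finset.card_le_card (Finset.sdiff_subset_sdiff Subset.rfl hPS)
    by_cases hwt : w.val < t
    · -- chain vertex
      have hba : a < w.val := by
        rcases lt_trichotomy w.val a with h | h | h
        · exact absurd (hPS (mem_filter.mpr ⟨mem_univ _, h⟩)) hwS
        · exact absurd (Fin.ext h) hwx
        · exact h
      have hsub : (univ.filter fun y => (GG t n).Adj w y) \ P ⊆
          univ.filter (fun y : Fin n => (a ≤ y.val ∧ y.val < w.val - 1) ∨
            (w.val + 2 ≤ y.val ∧ y.val < t) ∨ (t ≤ y.val ∧ y.val < t + cf t w.val)) := by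
        intro y hy
        obtain ⟨hyN, hyP⟩ := mem_sdiff.mp hy
        have hadj : RR t w.val y.val := (mem_filter.mp hyN).2
        have hya : ¬ y.val < a := fun h => hyP (mem_filter.mpr ⟨mem_univ _, h⟩)
        refine mem_filter.mpr ⟨mem_univ _, ?_⟩
        rcases hadj with ⟨h1, h2, h3⟩ | ⟨h1, h2, h3⟩ | ⟨h1, h2, h3⟩
        · rcases h3 with h3 | h3
          · right; left; omega
          · left; omega
        · right; right; omega
        · omega
      have hcardE : (univ.filter (fun y : Fin n => (a ≤ y.val ∧ y.val < w.val - 1) ∨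
            (w.val + 2 ≤ y.val ∧ y.val < t) ∨ (t ≤ y.val ∧ y.val < t + cf t w.val))).card =
          (w.val - 1 - a) + (t - (w.val + 2)) + cf t w.val := by
        rw [card_val_filter n (fun u => (a ≤ u ∧ u < w.val - 1) ∨
            (w.val + 2 ≤ u ∧ u < t) ∨ (t ≤ u ∧ u < t + cf t w.val))]
        have e : (Finset.range n).filter (fun u => (a ≤ u ∧ u < w.val - 1) ∨
            (w.val + 2 ≤ u ∧ u < t) ∨ (t ≤ u ∧ u < t + cf t w.val)) =
            (Finset.Ico a (w.val - 1) ∪ Finset.Ico (w.val + 2) t) ∪ Finset.Ico t (t + cf t w.val) := by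
          ext u
          have hbn := hcfn w.val hwt
          simp only [mem_filter, mem_range, mem_union, mem_Ico]
          omega
        rw [e, Finset.card_union_of_disjoint, Finset.card_union_of_disjoint]
        · simp only [Nat.card_Ico]; omega
        · rw [Finset.disjoint_left]; intro u h1 h2
          simp only [mem_Ico] at h1 h2; omega
        · rw [Finset.disjoint_left]; intro u h1 h2
          simp only [mem_union, mem_Ico] at h1 h2; omega
      have := AR1 hba hwt haS hs
      have hE := Finset.card_le_card hsub
      omega
    · -- b-type vertex
      by_cases hwc : w.val < t + cf t a
      · have hsub : (univ.filter fun y => (GG t n).Adj w y) \ P ⊆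
            univ.filter (fun y : Fin n => a ≤ y.val ∧ y.val < t) := by
          intro y hy
          obtain ⟨hyN, hyP⟩ := mem_sdiff.mp hy
          have hadj : RR t w.val y.val := (mem_filter.mp hyN).2
          have hya : ¬ y.val < a := fun h => hyP (mem_filter.mpr ⟨mem_univ _, h⟩)
          refine mem_filter.mpr ⟨mem_univ _, ?_⟩
          rcases hadj with ⟨h1, h2, h3⟩ | ⟨h1, h2, h3⟩ | ⟨h1, h2, h3⟩
          · omega
          · omega
          · exact ⟨by omega, h1⟩
        have hcardE := card_val_Ico n a t htn
        have := AR2 hxt haS hs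
        have hE := Finset.card_le_card hsub
        omega
      · have hempty : (univ.filter fun y => (GG t n).Adj w y) \ P = ∅ := by
          rw [Finset.eq_empty_iff_forall_notMem]
          intro y hy
          obtain ⟨hyN, hyP⟩ := mem_sdiff.mp hy
          have hadj : RR t w.val y.val := (mem_filter.mp hyN).2
          have hya : ¬ y.val < a := fun h => hyP (mem_filter.mpr ⟨mem_univ _, h⟩)
          rcases hadj with ⟨h1, h2, h3⟩ | ⟨h1, h2, h3⟩ | ⟨h1, h2, h3⟩
          · omega
          · omega
          · have := cf_anti (show a ≤ y.val by omega) h1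
            omega
        have := AR2 hxt haS hs
        rw [hempty] at hUB
        simp at hUB
        omega
  -- conclude uniqueness of max
  have hmax : maxDegOn (GG t n) A = degOn (GG t n) A x := by
    apply le_antisymm
    · apply Finset.sup_le
      intro w hw
      rcases eq_or_ne w x with rfl | h
      · exact le_rfl
      · exact (key w hw h).le
    · exact Finset.le_sup hxA
  have hfilter : (A.filter fun v => degOn (GG t n) A v = maxDegOn (GG t n) A) = {x} := by
    ext w
    simp only [mem_filter, mem_singleton]
    constructor
    · rintro ⟨hwA, hweq⟩
      by_contra hne'
      have := key w hwA hne'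
      rw [hmax] at hweq
      omega
    · rintro rfl
      exact ⟨hxA, by rw [hmax]⟩
  intro heq
  rcases heq with h | h
  · have hAcard : A.card = n - S.card := by
      rw [hA_def, card_sdiff_of_subset (subset_univ S), card_univ, Fintype.card_fin]
    omega
  · rw [hfilter] at h
    simp at h

lemma upper (t n : ℕ) (ht : 1 ≤ t) (hn : (t + 1).choose 2 + 3 ≤ n) :
    ∃ S : Finset (Fin n), S ⊆ univ ∧ S.card = t ∧ equates (GG t n) 2 (univ \ S) := by
  classical
  have hc2 := choose2_succ t
  have htn : t + 3 ≤ n := by have := Nat.zero_le (t.choose 2); omega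
  refine ⟨univ.filter (fun x : Fin n => x.val < t), subset_univ _,
    card_val_lt n t (by omega), ?_⟩
  set S := univ.filter (fun x : Fin n => x.val < t) with hS_def
  set A := univ \ S with hA_def
  have hAmem : ∀ w : Fin n, w ∈ A ↔ t ≤ w.val := by
    intro w
    simp only [hA_def, hS_def, mem_sdiff, mem_filter, mem_univ, true_and]
    omega
  have hdeg : ∀ w ∈ A, degOn (GG t n) A w = 0 := by
    intro w hw
    have hwt : t ≤ w.val := (hAmem w).mp hw
    unfold degOn
    rw [Finset.filter_congr_decidable]
    rw [Finset.card_eq_zero, Finset.eq_empty_iff_forall_notMem]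
    intro y hy
    obtain ⟨hyA, hadj⟩ := mem_filter.mp hy
    have hyt : t ≤ y.val := (hAmem y).mp hyA
    rcases hadj with ⟨h1, h2, h3⟩ | ⟨h1, h2, h3⟩ | ⟨h1, h2, h3⟩ <;> omega
  have hmax : maxDegOn (GG t n) A = 0 := by
    apply Nat.le_antisymm _ (Nat.zero_le _)
    unfold maxDegOn
    apply Finset.sup_le
    intro w hw
    exact le_of_eq (hdeg w hw)
  have hfilt : (A.filter fun v => degOn (GG t n) A v = maxDegOn (GG t n) A) = A := by
    apply Finset.filter_true_of_mem
    intro w hw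
    rw [hdeg w hw, hmax]
  right
  rw [hfilt]
  have hAcard : A.card = n - t := by
    rw [hA_def, card_sdiff_of_subset (subset_univ _), card_univ, Fintype.card_fin, card_val_lt n t (by omega)]
  omega

/-- For every `t ≥ 1` and every `n` with
`C(t+1,2) + 3 ≤ n ≤ C(t+2,2) + 2`, there is a graph on exactly `n` vertices
with `f(G) = t`. -/
theorem stmt8 (t n : ℕ) (ht : 1 ≤ t)
    (hlo : Nat.choose (t + 1) 2 + 3 ≤ n) (hhi : n ≤ Nat.choose (t + 2) 2 + 2) :
    ∃ G : SimpleGraph (Fin n), fk G 2 = t := by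
  classical
  refine ⟨GG t n, ?_⟩
  unfold fk fkOn
  have einst : (fun a b => Classical.propDecidable (a = b) : DecidableEq (Fin n)) =
      instDecidableEqFin n := Subsingleton.elim _ _
  rw [einst]
  have hmem : t ∈ {m | ∃ S, S ⊆ univ ∧ S.card = m ∧ equates (GG t n) 2 (univ \ S)} :=
    upper t n ht hlo
  have hlb : ∀ m ∈ {m | ∃ S, S ⊆ univ ∧ S.card = m ∧ equates (GG t n) 2 (univ \ S)},
      t ≤ m := by
    rintro m ⟨S, hS, rfl, heq⟩
    by_contra h
    exact lower t n ht hlo S (by omega) heq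
  exact le_antisymm (Nat.sInf_le hmem) (hlb _ (Nat.sInf_mem ⟨t, hmem⟩))
end
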